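/- Let l ≥ 3 be a natural number and let p(l) ∈ [2/(l+2), 1) for each l. For each such l, Pr(X=1|L=l) ≤ Pr(X=0|L=l), where Pr(X=1|L=l) = Φ(l)^{-2}(p·l·(1-p)^{l-1} − (1-p)^l + (1-p)^{2l}) and Pr(X=0|L=l) = Φ(l)^{-2}(1 − (1-p)^l − p·l·(1-p)^{l-1}) with Φ(l) = 1−(1-p)^l and p = p(l). Consequently, for L drawn uniformly from {3,...,T} (T ≥ 3) and p = p(L) depending on L, the unconditional probabilities satisfy Pr(X=1) ≤ Pr(X=0). -/

import Mathlib

/-- Quadratic Bernoulli inequality. -/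
lemma bern2 (n : ℕ) (x : ℝ) (hx : 0 ≤ x) :
    1 + n * x + n * ((n : ℝ) - 1) / 2 * x ^ 2 ≤ (1 + x) ^ n := by
  induction n with
  | zero => simp
  | succ m ih =>
    have hm : (0:ℝ) ≤ (m : ℝ) := Nat.cast_nonneg m
    have hmul := mul_le_mul_of_nonneg_right ih (by linarith : (0:ℝ) ≤ 1 + x)
    have hx3 : (0:ℝ) ≤ (m : ℝ) * ((m:ℝ) - 1) * x ^ 3 := by
      rcases Nat.eq_zero_or_pos m with h | h
      · simp [h]
      · have h1 : (1:ℝ) ≤ (m:ℝ) := by exact_mod_cast h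
        have h2 : (0:ℝ) ≤ (m:ℝ) * ((m:ℝ) - 1) := by nlinarith
        positivity
    have hexp : (1 + (m:ℝ) * x + (m:ℝ) * ((m:ℝ) - 1) / 2 * x ^ 2) * (1 + x)
        = 1 + ((m:ℝ)+1) * x + ((m:ℝ)+1) * (m:ℝ) / 2 * x ^ 2
          + (m:ℝ) * ((m:ℝ) - 1) / 2 * x ^ 3 := by ring
    rw [pow_succ (1+x) m]
    push_cast
    linarith [hmul, hexp, hx3]

/-- Key pointwise inequality: 2 p l (1-p)^(l-1) + (1-p)^(2l) ≤ 1. -/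
lemma key (l : ℕ) (hl : 3 ≤ l) (p : ℝ) (hp1 : 2 / ((l : ℝ) + 2) ≤ p) (hp2 : p < 1) :
    2 * p * (l : ℝ) * (1 - p) ^ (l - 1) + (1 - p) ^ (2 * l) ≤ 1 := by
  have hl3 : (3:ℝ) ≤ (l:ℝ) := by exact_mod_cast hl
  have hl0 : (0:ℝ) < (l:ℝ) := by linarith
  set q : ℝ := 1 - p with hqdef
  have hq1 : q < 1 := by
    have : 0 < 2 / ((l:ℝ) + 2) := by positivity
    simp only [hqdef]; linarith
  have hq0 : 0 < q := by simp only [hqdef]; linarith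
  have hql : q * ((l:ℝ) + 2) ≤ l := by
    have h2 : (0:ℝ) < (l:ℝ) + 2 := by linarith
    have := (div_le_iff₀ h2).mp hp1
    simp only [hqdef]; nlinarith
  set u : ℝ := 1 / q - 1 with hudef
  have hu0 : 0 < u := by
    have : 1 < 1 / q := (one_lt_div hq0).mpr hq1
    simp only [hudef]; linarith
  have hqu : q * (1 + u) = 1 := by
    rw [hudef]; field_simp; ring
  have hlu : 2 ≤ (l:ℝ) * u := by
    have h1q : ((l:ℝ) + 2) / (l:ℝ) ≤ 1 / q := by
      rw [div_le_div_iff₀ hl0 hq0]; linarith [hql]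
    have h2 : 2 / (l:ℝ) ≤ u := by
      have : ((l:ℝ) + 2) / (l:ℝ) = 1 + 2 / l := by field_simp
      rw [hudef]; linarith [h1q, this.symm.le]
    calc (2:ℝ) = (l:ℝ) * (2 / l) := by field_simp
    _ ≤ (l:ℝ) * u := mul_le_mul_of_nonneg_left h2 (by linarith)
  have hp0 : 0 < p := lt_of_lt_of_le (by positivity) hp1
  have hpuq : p * (1 + u) = u := by
    have : p = 1 - q := by rw [hqdef]; ring
    rw [this]
    field_simp [hudef]
    linear_combination -hqu
  clear_value q u
  clear hudef hqdef
  -- Bound 1 : q^(2l) ≤ 3/35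
  have hb1 : q ^ (2 * l) ≤ 3 / 35 := by
    have hb := bern2 (2 * l) u hu0.le
    push_cast at hb
    have hq2 : 20 * (l:ℝ) ≤ 3 * (2*(l:ℝ)-1) * ((l:ℝ)*u)^2 := by
      nlinarith [mul_nonneg (by linarith : (0:ℝ) ≤ 2*(l:ℝ)-1) (sq_nonneg ((l:ℝ)*u - 2)),
        mul_nonneg (by linarith : (0:ℝ) ≤ 2*(l:ℝ)-1) (by linarith : (0:ℝ) ≤ (l:ℝ)*u - 2)]
    have h6 : (20:ℝ) ≤ 3 * (2*(l:ℝ)-1) * (l:ℝ) * u^2 := by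
      nlinarith [hq2, hl0]
    have hpow : (35:ℝ)/3 ≤ (1 + u) ^ (2 * l) := by
      have hexp : 2 * (l:ℝ) * (2 * (l:ℝ) - 1) / 2 * u ^ 2 = (3 * (2*(l:ℝ)-1) * (l:ℝ) * u^2)/3 := by ring
      linarith [hb, h6, hlu]
    have hppos : (0:ℝ) < (1+u) ^ (2*l) := by positivity
    have hqe : q ^ (2*l) = 1 / (1 + u) ^ (2*l) := by
      rw [eq_div_iff hppos.ne', ← mul_pow, hqu, one_pow]
    rw [hqe]
    calc 1 / (1+u)^(2*l) ≤ 1 / (35/3) := by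
          apply one_div_le_one_div_of_le (by norm_num) hpow
    _ = 3/35 := by norm_num
  -- Bound 2 : 2 p l q^(l-1) ≤ 32/35
  have hb2 : 2 * p * (l:ℝ) * q ^ (l - 1) ≤ 32 / 35 := by
    have hb := bern2 (l - 1) u hu0.le
    have hcast : ((l - 1 : ℕ) : ℝ) = (l:ℝ) - 1 := by
      have h1 : 1 ≤ l := by omega
      push_cast [h1]; ring
    rw [hcast] at hb
    set D : ℝ := 1 + ((l:ℝ) - 1) * u + ((l:ℝ) - 1) * (((l:ℝ) - 1) - 1) / 2 * u ^ 2 with hDdef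
    have hD1 : (1:ℝ) ≤ D := by
      have h1 : (0:ℝ) ≤ ((l:ℝ)-1) * (((l:ℝ)-1)-1) / 2 * u ^ 2 := by
        have : (0:ℝ) ≤ ((l:ℝ)-1) * (((l:ℝ)-1)-1) := mul_nonneg (by linarith) (by linarith)
        positivity
      have h2 : (0:ℝ) ≤ ((l:ℝ)-1) * u := mul_nonneg (by linarith) hu0.le
      simp only [hDdef]; linarith
    have hD0 : (0:ℝ) < D := by linarith
    clear_value D
    have hpoly : 70 * (l:ℝ) * u ≤ 32 * (1 + u) * D := by
      have hM : (0:ℝ) ≤ (l:ℝ) - 3 := by linarith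
      have hS : (0:ℝ) ≤ (l:ℝ) * u - 2 := by linarith
      have hM2 := pow_nonneg hM 2
      have hM3 := pow_nonneg hM 3
      have hS2 := pow_nonneg hS 2
      have hS3 := pow_nonneg hS 3
      have hiden : (l:ℝ)^3 * (32 * (1 + u) * D - 70 * (l:ℝ) * u)
          = (20*((l:ℝ)-3)^3 + 244*((l:ℝ)-3)^2 + 540*((l:ℝ)-3) + 220)
          + (26*((l:ℝ)-3)^3 + 362*((l:ℝ)-3)^2 + 894*((l:ℝ)-3) + 510) * ((l:ℝ)*u - 2)
          + (16*((l:ℝ)-3)^3 + 224*((l:ℝ)-3)^2 + 624*((l:ℝ)-3) + 480) * ((l:ℝ)*u - 2)^2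
          + (16*((l:ℝ)-3)^2 + 48*((l:ℝ)-3) + 32) * ((l:ℝ)*u - 2)^3 := by
        simp only [hDdef]; ring
      have t0 : (0:ℝ) ≤ 20*((l:ℝ)-3)^3 + 244*((l:ℝ)-3)^2 + 540*((l:ℝ)-3) + 220 := by
        linarith
      have t1 : (0:ℝ) ≤ (26*((l:ℝ)-3)^3 + 362*((l:ℝ)-3)^2 + 894*((l:ℝ)-3) + 510) * ((l:ℝ)*u - 2) :=
        mul_nonneg (by linarith) hS
      have t2 : (0:ℝ) ≤ (16*((l:ℝ)-3)^3 + 224*((l:ℝ)-3)^2 + 624*((l:ℝ)-3) + 480) * ((l:ℝ)*u - 2)^2 :=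
        mul_nonneg (by linarith) hS2
      have t3 : (0:ℝ) ≤ (16*((l:ℝ)-3)^2 + 48*((l:ℝ)-3) + 32) * ((l:ℝ)*u - 2)^3 :=
        mul_nonneg (by linarith) hS3
      have hprod : (0:ℝ) ≤ (l:ℝ)^3 * (32 * (1 + u) * D - 70 * (l:ℝ) * u) := by
        rw [hiden]; linarith
      by_contra hcon
      push_neg at hcon
      have hneg : (l:ℝ)^3 * (32 * (1 + u) * D - 70 * (l:ℝ) * u) < 0 :=
        mul_neg_of_pos_of_neg (pow_pos hl0 3) (by linarith)
      linarith
    have h7 : 70 * (p * (l:ℝ)) ≤ 32 * D := by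
      have hu1 : (0:ℝ) < 1 + u := by linarith
      have : 70 * (p * (l:ℝ)) * (1 + u) ≤ (32 * D) * (1 + u) := by
        calc 70 * (p * (l:ℝ)) * (1 + u) = 70 * (l:ℝ) * (p * (1+u)) := by ring
        _ = 70 * (l:ℝ) * u := by rw [hpuq]
        _ ≤ 32 * (1 + u) * D := hpoly
        _ = (32 * D) * (1 + u) := by ring
      exact le_of_mul_le_mul_right this hu1
    have hXpos : (0:ℝ) < (1+u) ^ (l-1) := by positivity
    have hqe : q ^ (l-1) = 1 / (1 + u) ^ (l-1) := by
      rw [eq_div_iff hXpos.ne', ← mul_pow, hqu, one_pow]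
    rw [hqe]
    have hnum : (0:ℝ) ≤ 2 * p * (l:ℝ) := by positivity
    calc 2 * p * (l:ℝ) * (1 / (1+u)^(l-1)) = (2 * p * (l:ℝ)) / (1+u)^(l-1) := by ring
    _ ≤ (2 * p * (l:ℝ)) / D := div_le_div_of_nonneg_left hnum hD0 hb
    _ ≤ 32/35 := by rw [div_le_iff₀ hD0]; linarith
  linarith [hb1, hb2]

theorem overlap_le_nonoverlap (T : ℕ) (hT : 3 ≤ T) (p : ℕ → ℝ)
    (hp : ∀ l : ℕ, 3 ≤ l → 2 / ((l : ℝ) + 2) ≤ p l ∧ p l < 1) :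
    (∀ l : ℕ, 3 ≤ l →
      (p l * (l : ℝ) * (1 - p l) ^ (l - 1) - (1 - p l) ^ l + (1 - p l) ^ (2 * l)) /
          (1 - (1 - p l) ^ l) ^ 2 ≤
        (1 - (1 - p l) ^ l - p l * (l : ℝ) * (1 - p l) ^ (l - 1)) /
          (1 - (1 - p l) ^ l) ^ 2) ∧
    (1 / ((T : ℝ) - 2)) * ∑ l ∈ Finset.Icc 3 T,
        (p l * (l : ℝ) * (1 - p l) ^ (l - 1) - (1 - p l) ^ l + (1 - p l) ^ (2 * l)) /
          (1 - (1 - p l) ^ l) ^ 2 ≤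
      (1 / ((T : ℝ) - 2)) * ∑ l ∈ Finset.Icc 3 T,
        (1 - (1 - p l) ^ l - p l * (l : ℝ) * (1 - p l) ^ (l - 1)) /
          (1 - (1 - p l) ^ l) ^ 2 := by
  have hpt : ∀ l : ℕ, 3 ≤ l →
      (p l * (l : ℝ) * (1 - p l) ^ (l - 1) - (1 - p l) ^ l + (1 - p l) ^ (2 * l)) /
          (1 - (1 - p l) ^ l) ^ 2 ≤
        (1 - (1 - p l) ^ l - p l * (l : ℝ) * (1 - p l) ^ (l - 1)) /
          (1 - (1 - p l) ^ l) ^ 2 := by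
    intro l hl
    obtain ⟨hp1, hp2⟩ := hp l hl
    have hkey := key l hl (p l) hp1 hp2
    have hq0 : 0 < 1 - p l := by
      have : 0 < 2 / ((l:ℝ) + 2) := by
        have : (3:ℝ) ≤ (l:ℝ) := by exact_mod_cast hl
        positivity
      linarith
    have hp0 : 0 < p l := by
      have h3 : (3:ℝ) ≤ (l:ℝ) := by exact_mod_cast hl
      have : (0:ℝ) < 2 / ((l:ℝ) + 2) := by positivity
      linarith
    have hql : (1 - p l) ^ l < 1 :=
      pow_lt_one₀ (by linarith) (by linarith) (by omega)
    have hden : (0:ℝ) < (1 - (1 - p l) ^ l) ^ 2 := by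
      have : 0 < 1 - (1 - p l) ^ l := by linarith
      positivity
    apply div_le_div_of_nonneg_right ?_ hden.le
    linarith
  refine ⟨hpt, ?_⟩
  have hc : (0:ℝ) ≤ 1 / ((T : ℝ) - 2) := by
    have : (3:ℝ) ≤ (T:ℝ) := by exact_mod_cast hT
    have : (0:ℝ) < (T:ℝ) - 2 := by linarith
    positivity
  apply mul_le_mul_of_nonneg_left ?_ hc
  apply Finset.sum_le_sum
  intro l hlmem
  exact hpt l (Finset.mem_Icc.mp hlmem).1
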